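/- Let λ > 0 with θ_λ ∈ (0, π/2) defined by tan θ_λ = 1/λ, let m ∈ (0, θ_λ], let μ_D : (0, m] → [0, ∞) be continuous, and let (ψ, a_c) be a correction pair. Then for every φ ∈ (0, m] there exists a unique a ∈ [0, 1) satisfying the implicit equation E(φ, a), and the resulting map τ : (0, m] → [0, 1), τ(φ) := this unique a, is continuous. -/

import Mathlib

open Real Set

/-- The function `g(φ) = cot φ · tan(θ − φ) + (μ_D(φ)/sin φ)(1 + cot φ · tan(θ − φ))`. -/
noncomputable def gBEM (θ : ℝ) (μD : ℝ → ℝ) (φ : ℝ) : ℝ :=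
  (Real.cos φ / Real.sin φ) * Real.tan (θ - φ) +
    (μD φ / Real.sin φ) * (1 + (Real.cos φ / Real.sin φ) * Real.tan (θ - φ))

/-- The implicit equation `E(φ, a)`:
`a/(1−a) + (sin θ · sin φ / cos(θ−φ)) · ψ((a−a_c)_+)/(1−a)² = g(φ)`. -/
def EBEM (θ : ℝ) (μD ψ : ℝ → ℝ) (ac φ a : ℝ) : Prop :=
  a / (1 - a) +
      (Real.sin θ * Real.sin φ / Real.cos (θ - φ)) * ψ (max (a - ac) 0) / (1 - a) ^ 2
    = gBEM θ μD φ

/-- The left-hand side of the implicit equation, as a function of `a`. -/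
noncomputable def FBEM (θ : ℝ) (ψ : ℝ → ℝ) (ac φ a : ℝ) : ℝ :=
  a / (1 - a) +
      (Real.sin θ * Real.sin φ / Real.cos (θ - φ)) * ψ (max (a - ac) 0) / (1 - a) ^ 2

lemma EBEM_iff (θ : ℝ) (μD ψ : ℝ → ℝ) (ac φ a : ℝ) :
    EBEM θ μD ψ ac φ a ↔ FBEM θ ψ ac φ a = gBEM θ μD φ := Iff.rfl

lemma FBEM_strictMonoOn (θ : ℝ) (ψ : ℝ → ℝ) (ac φ : ℝ)
    (hc : 0 ≤ Real.sin θ * Real.sin φ / Real.cos (θ - φ))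
    (hψmono : MonotoneOn ψ (Ici 0)) (hψnn : ∀ x ∈ Ici (0 : ℝ), 0 ≤ ψ x) :
    StrictMonoOn (FBEM θ ψ ac φ) (Ico 0 1) := by
  intro a ha b hb hab
  obtain ⟨ha0, ha1⟩ := ha
  obtain ⟨hb0, hb1⟩ := hb
  have h1a : (0 : ℝ) < 1 - a := by linarith
  have h1b : (0 : ℝ) < 1 - b := by linarith
  unfold FBEM
  have h1 : a / (1 - a) < b / (1 - b) := by
    rw [div_lt_div_iff₀ h1a h1b]; nlinarith
  have hma : max (a - ac) 0 ∈ Ici (0 : ℝ) := Set.mem_Ici.mpr (le_max_right _ _)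
  have hmb : max (b - ac) 0 ∈ Ici (0 : ℝ) := Set.mem_Ici.mpr (le_max_right _ _)
  have h2 : ψ (max (a - ac) 0) ≤ ψ (max (b - ac) 0) :=
    hψmono hma hmb (max_le_max (by linarith) le_rfl)
  have h3 : ψ (max (a - ac) 0) / (1 - a) ^ 2 ≤ ψ (max (b - ac) 0) / (1 - b) ^ 2 :=
    div_le_div₀ (hψnn _ hmb) h2 (by positivity) (by nlinarith)
  have h4 : Real.sin θ * Real.sin φ / Real.cos (θ - φ) * ψ (max (a - ac) 0) / (1 - a) ^ 2 ≤
      Real.sin θ * Real.sin φ / Real.cos (θ - φ) * ψ (max (b - ac) 0) / (1 - b) ^ 2 := by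
    have e1 : Real.sin θ * Real.sin φ / Real.cos (θ - φ) * ψ (max (a - ac) 0) / (1 - a) ^ 2 =
        Real.sin θ * Real.sin φ / Real.cos (θ - φ) * (ψ (max (a - ac) 0) / (1 - a) ^ 2) := by
      ring
    have e2 : Real.sin θ * Real.sin φ / Real.cos (θ - φ) * ψ (max (b - ac) 0) / (1 - b) ^ 2 =
        Real.sin θ * Real.sin φ / Real.cos (θ - φ) * (ψ (max (b - ac) 0) / (1 - b) ^ 2) := by
      ring
    rw [e1, e2]
    exact mul_le_mul_of_nonneg_left h3 hc
  linarith

/-- For every `φ ∈ (0, m]` the implicit equation `E(φ, a)` has a unique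
solution `a ∈ [0, 1)`, and the resulting map `τ` is continuous on `(0, m]`. -/
theorem bem_tau_exists_unique_continuous
    (lam θ m : ℝ) (hlam : 0 < lam) (hθ : θ ∈ Ioo 0 (π / 2))
    (htan : Real.tan θ = 1 / lam) (hm : m ∈ Ioc 0 θ)
    (μD : ℝ → ℝ) (hμDc : ContinuousOn μD (Ioc 0 m))
    (hμDnn : ∀ φ ∈ Ioc 0 m, 0 ≤ μD φ)
    (ac : ℝ) (hac : ac ∈ Ioo (0 : ℝ) 1)
    (ψ : ℝ → ℝ) (hψc : ContinuousOn ψ (Ici 0)) (hψmono : MonotoneOn ψ (Ici 0))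
    (hψ0 : ψ 0 = 0) (hψnn : ∀ x ∈ Ici (0 : ℝ), 0 ≤ ψ x) :
    ∃ τ : ℝ → ℝ, ContinuousOn τ (Ioc 0 m) ∧
      ∀ φ ∈ Ioc 0 m, τ φ ∈ Ico (0 : ℝ) 1 ∧ EBEM θ μD ψ ac φ (τ φ) ∧
        ∀ a ∈ Ico (0 : ℝ) 1, EBEM θ μD ψ ac φ a → a = τ φ := by
  classical
  obtain ⟨hθ0, hθ2⟩ := hθ
  obtain ⟨hm0, hmθ⟩ := hm
  obtain ⟨hac0, hac1⟩ := hac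
  have hπ : (0 : ℝ) < π := Real.pi_pos
  -- basic trigonometric facts on the interval
  have hfacts : ∀ φ ∈ Ioc (0 : ℝ) m, 0 < Real.sin φ ∧ 0 < Real.cos φ ∧
      0 < Real.cos (θ - φ) ∧ 0 ≤ Real.tan (θ - φ) := by
    rintro φ ⟨hφ0, hφm⟩
    have hφθ : φ ≤ θ := hφm.trans hmθ
    have hs : 0 < Real.sin φ := Real.sin_pos_of_pos_of_lt_pi hφ0 (by linarith)
    have hcφ : 0 < Real.cos φ := Real.cos_pos_of_mem_Ioo ⟨by linarith, by linarith⟩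
    have hcθφ : 0 < Real.cos (θ - φ) := Real.cos_pos_of_mem_Ioo ⟨by linarith, by linarith⟩
    have hsθφ : 0 ≤ Real.sin (θ - φ) :=
      Real.sin_nonneg_of_nonneg_of_le_pi (by linarith) (by linarith)
    refine ⟨hs, hcφ, hcθφ, ?_⟩
    rw [Real.tan_eq_sin_div_cos]; positivity
  have hsinθ : 0 < Real.sin θ := Real.sin_pos_of_pos_of_lt_pi hθ0 (by linarith)
  have hcnn : ∀ φ ∈ Ioc (0 : ℝ) m, 0 ≤ Real.sin θ * Real.sin φ / Real.cos (θ - φ) := by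
    intro φ hφ
    obtain ⟨hs, -, hcθφ, -⟩ := hfacts φ hφ
    positivity
  have hGnn : ∀ φ ∈ Ioc (0 : ℝ) m, 0 ≤ gBEM θ μD φ := by
    intro φ hφ
    obtain ⟨hs, hcφ, -, htn⟩ := hfacts φ hφ
    have h1 : 0 ≤ Real.cos φ / Real.sin φ * Real.tan (θ - φ) :=
      mul_nonneg (by positivity) htn
    have h2 : 0 ≤ μD φ / Real.sin φ := div_nonneg (hμDnn φ hφ) hs.le
    unfold gBEM
    have h3 : 0 ≤ 1 + Real.cos φ / Real.sin φ * Real.tan (θ - φ) := by linarith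
    nlinarith [mul_nonneg h2 h3]
  have hsin_ne : ∀ φ ∈ Ioc (0 : ℝ) m, Real.sin φ ≠ 0 :=
    fun φ hφ => (hfacts φ hφ).1.ne'
  -- continuity of g and of the coefficient
  have htanc : ContinuousOn (fun φ => Real.tan (θ - φ)) (Ioc 0 m) := by
    intro x hx
    exact ((Real.continuousAt_tan.mpr (hfacts x hx).2.2.1.ne').comp
      (continuousAt_const.sub continuousAt_id)).continuousWithinAt
  have hcot : ContinuousOn (fun φ => Real.cos φ / Real.sin φ * Real.tan (θ - φ)) (Ioc 0 m) :=
    (Real.continuous_cos.continuousOn.div Real.continuous_sin.continuousOn hsin_ne).mul htanc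
  have hGc : ContinuousOn (gBEM θ μD) (Ioc 0 m) := by
    unfold gBEM
    exact hcot.add ((hμDc.div Real.continuous_sin.continuousOn hsin_ne).mul
      (continuousOn_const.add hcot))
  have hcc : ContinuousOn (fun φ => Real.sin θ * Real.sin φ / Real.cos (θ - φ)) (Ioc 0 m) :=
    (continuousOn_const.mul Real.continuous_sin.continuousOn).div
      ((Real.continuous_cos.comp (continuous_const.sub continuous_id)).continuousOn)
      (fun x hx => (hfacts x hx).2.2.1.ne')
  -- pointwise strict monotonicity
  have hmono : ∀ φ ∈ Ioc (0 : ℝ) m, StrictMonoOn (FBEM θ ψ ac φ) (Ico 0 1) :=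
    fun φ hφ => FBEM_strictMonoOn θ ψ ac φ (hcnn φ hφ) hψmono hψnn
  -- existence of a solution for each φ
  have hex : ∀ φ ∈ Ioc (0 : ℝ) m, ∃ a, a ∈ Ico (0 : ℝ) 1 ∧
      FBEM θ ψ ac φ a = gBEM θ μD φ := by
    intro φ hφ
    set G := gBEM θ μD φ with hGdef
    have hG : 0 ≤ G := hGnn φ hφ
    have h1G : (0 : ℝ) < 1 + G := by linarith
    set a₀ : ℝ := G / (1 + G) with ha₀def
    have ha₀0 : 0 ≤ a₀ := by positivity
    have ha₀1 : a₀ < 1 := by rw [ha₀def, div_lt_one h1G]; linarith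
    have hne : ∀ a ∈ Icc (0 : ℝ) a₀, 1 - a ≠ 0 := by
      rintro a ⟨-, ha⟩; nlinarith
    have hFc : ContinuousOn (fun a => FBEM θ ψ ac φ a) (Icc 0 a₀) := by
      unfold FBEM
      apply ContinuousOn.add
      · exact continuousOn_id.div (continuousOn_const.sub continuousOn_id) hne
      · apply ContinuousOn.div
        · exact continuousOn_const.mul (hψc.comp
            (((continuous_id.sub continuous_const).max continuous_const).continuousOn)
            (fun a _ => Set.mem_Ici.mpr (le_max_right _ _)))
        · exact ((continuous_const.sub continuous_id).pow 2).continuousOn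
        · intro a ha; exact pow_ne_zero 2 (hne a ha)
    have hF0 : FBEM θ ψ ac φ 0 = 0 := by
      unfold FBEM
      rw [max_eq_right (by linarith : (0:ℝ) - ac ≤ 0), hψ0]
      simp
    have hFa₀ : G ≤ FBEM θ ψ ac φ a₀ := by
      have key : a₀ / (1 - a₀) = G := by
        rw [ha₀def]
        field_simp
        ring
      have h2 : 0 ≤ Real.sin θ * Real.sin φ / Real.cos (θ - φ) *
          ψ (max (a₀ - ac) 0) / (1 - a₀) ^ 2 := by
        have := hcnn φ hφ
        have := hψnn _ (le_max_right (a₀ - ac) 0)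
        have h1a : (0:ℝ) < 1 - a₀ := by linarith
        positivity
      unfold FBEM
      linarith [key.ge]
    have hmem : G ∈ Icc (FBEM θ ψ ac φ 0) (FBEM θ ψ ac φ a₀) := ⟨by rw [hF0]; exact hG, hFa₀⟩
    obtain ⟨a, ⟨ha0, ha1⟩, haeq⟩ := intermediate_value_Icc ha₀0 hFc hmem
    exact ⟨a, ⟨ha0, lt_of_le_of_lt ha1 ha₀1⟩, haeq⟩
  -- define τ
  have hτex : ∃ τ : ℝ → ℝ, ∀ φ ∈ Ioc (0 : ℝ) m, τ φ ∈ Ico (0 : ℝ) 1 ∧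
      FBEM θ ψ ac φ (τ φ) = gBEM θ μD φ :=
    ⟨fun φ => if h : φ ∈ Ioc (0 : ℝ) m then (hex φ h).choose else 0,
      fun φ h => by simp only [dif_pos h]; exact (hex φ h).choose_spec⟩
  obtain ⟨τ, hτ⟩ := hτex
  refine ⟨τ, ?_, ?_⟩
  · -- continuity
    intro φ₀ hφ₀
    obtain ⟨hτ₀mem, hτ₀eq⟩ := hτ φ₀ hφ₀
    rw [ContinuousWithinAt]
    rw [tendsto_order]
    constructor
    · intro b hb
      rcases lt_or_ge b 0 with hb0 | hb0
      · filter_upwards [self_mem_nhdsWithin] with φ hφ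
        exact lt_of_lt_of_le hb0 (hτ φ hφ).1.1
      · have hbmem : b ∈ Ico (0 : ℝ) 1 := ⟨hb0, hb.trans hτ₀mem.2⟩
        have hFb : FBEM θ ψ ac φ₀ b < gBEM θ μD φ₀ := by
          rw [← hτ₀eq]; exact hmono φ₀ hφ₀ hbmem hτ₀mem hb
        have hcont : ContinuousOn (fun φ => gBEM θ μD φ - FBEM θ ψ ac φ b) (Ioc 0 m) := by
          apply hGc.sub
          unfold FBEM
          refine continuousOn_const.add (ContinuousOn.div ?_ continuousOn_const ?_)
          · exact hcc.mul continuousOn_const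
          · intro x hx
            have : (0:ℝ) < 1 - b := by linarith [hbmem.2]
            positivity
        have hpos : (0:ℝ) < gBEM θ μD φ₀ - FBEM θ ψ ac φ₀ b := by linarith
        have hev := (hcont φ₀ hφ₀).eventually (eventually_gt_nhds hpos)
        filter_upwards [hev, self_mem_nhdsWithin] with φ hφpos hφ
        have heq := (hτ φ hφ).2
        have : FBEM θ ψ ac φ b < FBEM θ ψ ac φ (τ φ) := by rw [heq]; linarith
        exact ((hmono φ hφ).lt_iff_lt hbmem (hτ φ hφ).1).mp this
    · intro b hb
      rcases le_or_gt 1 b with hb1 | hb1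
      · filter_upwards [self_mem_nhdsWithin] with φ hφ
        exact lt_of_lt_of_le (hτ φ hφ).1.2 hb1
      · have hbmem : b ∈ Ico (0 : ℝ) 1 := ⟨hτ₀mem.1.trans hb.le, hb1⟩
        have hFb : gBEM θ μD φ₀ < FBEM θ ψ ac φ₀ b := by
          rw [← hτ₀eq]; exact hmono φ₀ hφ₀ hτ₀mem hbmem hb
        have hcont : ContinuousOn (fun φ => FBEM θ ψ ac φ b - gBEM θ μD φ) (Ioc 0 m) := by
          apply ContinuousOn.sub _ hGc
          unfold FBEM
          refine continuousOn_const.add (ContinuousOn.div ?_ continuousOn_const ?_)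
          · exact hcc.mul continuousOn_const
          · intro x hx
            have : (0:ℝ) < 1 - b := by linarith
            positivity
        have hpos : (0:ℝ) < FBEM θ ψ ac φ₀ b - gBEM θ μD φ₀ := by linarith
        have hev := (hcont φ₀ hφ₀).eventually (eventually_gt_nhds hpos)
        filter_upwards [hev, self_mem_nhdsWithin] with φ hφpos hφ
        have heq := (hτ φ hφ).2
        have : FBEM θ ψ ac φ (τ φ) < FBEM θ ψ ac φ b := by rw [heq]; linarith
        exact ((hmono φ hφ).lt_iff_lt (hτ φ hφ).1 hbmem).mp this
  · intro φ hφ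
    obtain ⟨hmem, heq⟩ := hτ φ hφ
    refine ⟨hmem, heq, ?_⟩
    intro a ha haE
    rw [EBEM_iff] at haE
    exact (hmono φ hφ).injOn ha hmem (by rw [haE, heq])
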